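/- Let α ∈ (0,1) be irrational, T(x) = x + α the rotation of ℝ/ℤ, and β ∈ (0,α) irrational. Then for every γ ∈ ℝ/ℤ (with the interval [γ, γ+β) disjoint from its T-image) and every δ > 0, there exists k ∈ ℤ such that λ({x : (T^k ∘ T_{[0,β)} ∘ T^{-k})(x) ≠ T_{[γ, γ+β)}(x)}) < δ; that is, every involution T_{[γ,γ+β)} lies in the uniform closure of the set of conjugates of T_{[0,β)} by powers of T. -/

import Mathlib

open MeasureTheory Set

/- For a bijection `T : X → X` and a set `A ⊆ X` with `A ∩ T(A) = ∅`, the involution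
`T_A : X → X` sends `x ↦ T x` on `A`, `x ↦ T⁻¹ x` on `T '' A`, and is the identity
elsewhere. -/
open Classical in
noncomputable def invol {X : Type*} (T : Equiv.Perm X) (A : Set X) : X → X :=
  fun x => if x ∈ A then T x else if x ∈ ⇑T '' A then T.symm x else x

/-- For irrational `α`, the set `{k•α + m : k m : ℤ}` is dense; in particular we can land
in any interval `(g - ε, g)`. -/
lemma dense_aux (α : ℝ) (hαirr : Irrational α) (g ε : ℝ) (hε : 0 < ε) :
    ∃ k m : ℤ, g - ((k : ℤ) • α + (m : ℝ)) ∈ Ioo 0 ε := by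
  set S : AddSubgroup ℝ :=
    AddSubgroup.closure ({α} : Set ℝ) ⊔ AddSubgroup.closure ({1} : Set ℝ) with hS
  have hαS : α ∈ S := AddSubgroup.mem_sup_left (AddSubgroup.subset_closure rfl)
  have h1S : (1 : ℝ) ∈ S := AddSubgroup.mem_sup_right (AddSubgroup.subset_closure rfl)
  have hdense : Dense (S : Set ℝ) := by
    rcases S.dense_or_cyclic with h | ⟨a, ha⟩
    · exact h
    · exfalso
      rw [ha, ← AddSubgroup.zmultiples_eq_closure] at hαS h1S
      obtain ⟨k, hk⟩ := AddSubgroup.mem_zmultiples_iff.mp hαS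
      obtain ⟨m, hm⟩ := AddSubgroup.mem_zmultiples_iff.mp h1S
      have hm0 : (m : ℝ) ≠ 0 := by
        intro h
        rw [zsmul_eq_mul, h, zero_mul] at hm
        exact one_ne_zero hm.symm
      have hk' : (k : ℝ) * a = α := by rw [← hk, zsmul_eq_mul]
      have hm' : (m : ℝ) * a = 1 := by rw [← hm, zsmul_eq_mul]
      exact hαirr ⟨(k : ℚ) / (m : ℚ), by
        push_cast
        rw [div_eq_iff hm0, ← hk', mul_assoc, mul_comm a, hm', mul_one]⟩
  obtain ⟨s, hsS, hs⟩ := hdense.exists_between (show g - ε < g by linarith)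
  obtain ⟨a, haS, b, hbS, hab⟩ := AddSubgroup.mem_sup.mp hsS
  rw [← AddSubgroup.zmultiples_eq_closure] at haS hbS
  obtain ⟨k, hk⟩ := AddSubgroup.mem_zmultiples_iff.mp haS
  obtain ⟨m, hm⟩ := AddSubgroup.mem_zmultiples_iff.mp hbS
  refine ⟨k, m, ?_⟩
  have hb1 : (m : ℝ) = b := by rw [← hm]; simp [zsmul_eq_mul]
  have hkm : (k : ℤ) • α + (m : ℝ) = s := by rw [hk, hb1, hab]
  rw [hkm]
  exact ⟨by linarith [hs.2], by linarith [hs.1]⟩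

theorem stmt10 (α : ℝ) (hαirr : Irrational α) (hα0 : 0 < α) (hα1 : α < 1)
    (β : ℝ) (hβirr : Irrational β) (hβ0 : 0 < β) (hβα : β < α)
    (T : Equiv.Perm UnitAddCircle) (hT : ⇑T = fun x => x + (α : UnitAddCircle))
    (γ : UnitAddCircle)
    (harc : Disjoint ((γ + ·) '' (((↑·) : ℝ → UnitAddCircle) '' Ico 0 β))
      (⇑T '' ((γ + ·) '' (((↑·) : ℝ → UnitAddCircle) '' Ico 0 β))))
    (δ : ENNReal) (hδ : 0 < δ) :
    ∃ k : ℤ,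
      volume {x | (⇑(T ^ k) ∘ invol T (((↑·) : ℝ → UnitAddCircle) '' Ico 0 β) ∘ ⇑(T ^ (-k))) x ≠
        invol T ((γ + ·) '' (((↑·) : ℝ → UnitAddCircle) '' Ico 0 β)) x} < δ := by
  classical
  set c : UnitAddCircle := (α : UnitAddCircle) with hc
  set A : Set UnitAddCircle := ((↑·) : ℝ → UnitAddCircle) '' Ico 0 β with hA
  set B : Set UnitAddCircle := (γ + ·) '' A with hB
  -- symm formula
  have hTsymm : ⇑T.symm = fun x => x - c := by
    funext x
    apply T.injective
    rw [Equiv.apply_symm_apply, hT]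
    simp
  -- powers of T
  have hTk : ∀ k : ℤ, ⇑(T ^ k) = fun x => x + k • c := by
    intro k
    induction k using Int.induction_on with
    | zero => funext x; simp
    | succ n ih =>
      funext x
      rw [zpow_add_one, Equiv.Perm.mul_apply, hT, ih]
      dsimp only
      rw [add_zsmul, one_zsmul]
      abel
    | pred n ih =>
      funext x
      rw [zpow_sub_one, Equiv.Perm.mul_apply, ih, Equiv.Perm.inv_def, hTsymm]
      dsimp only
      rw [sub_zsmul, one_zsmul]
      abel
  -- conjugation formula
  have hconj : ∀ (k : ℤ) (x : UnitAddCircle),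
      (⇑(T ^ k) ∘ invol T A ∘ ⇑(T ^ (-k))) x
        = invol T ((· + ((k : ℤ) • c : UnitAddCircle)) '' A) x := by
    intro k x
    set S : Set UnitAddCircle := (· + ((k : ℤ) • c : UnitAddCircle)) '' A with hSdef
    have hy : ⇑(T ^ (-k)) x = x - k • c := by
      rw [hTk]
      dsimp only
      rw [neg_zsmul, ← sub_eq_add_neg]
    have hmem1 : x ∈ S ↔ x - k • c ∈ A := by
      rw [hSdef, Set.image_add_right, Set.mem_preimage, ← sub_eq_add_neg]
    have hmem2 : x ∈ ⇑T '' S ↔ x - k • c ∈ ⇑T '' A := by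
      rw [hT, hSdef]
      constructor
      · rintro ⟨y, ⟨a, ha, rfl⟩, rfl⟩
        exact ⟨a, ha, by beta_reduce; rw [add_right_comm, add_sub_cancel_right]⟩
      · rintro ⟨a, ha, hax⟩
        refine ⟨a + k • c, ⟨a, ha, rfl⟩, ?_⟩
        show a + k • c + c = x
        have h3 : a + c + k • c = x := eq_sub_iff_add_eq.mp hax
        rw [← h3]; abel
    simp only [Function.comp_apply, hy, invol]
    by_cases h1 : x - k • c ∈ A
    · rw [if_pos h1, if_pos (hmem1.mpr h1), hTk k, hT]
      dsimp only
      abel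
    · rw [if_neg h1, if_neg (fun h => h1 (hmem1.mp h))]
      by_cases h2 : x - k • c ∈ ⇑T '' A
      · rw [if_pos h2, if_pos (hmem2.mpr h2), hTk k, hTsymm]
        dsimp only
        abel
      · rw [if_neg h2, if_neg (fun h => h2 (hmem2.mp h)), hTk k]
        dsimp only
        abel
  -- difference set bound
  have hdiff : ∀ S : Set UnitAddCircle,
      {x | invol T S x ≠ invol T B x} ⊆ symmDiff S B ∪ ⇑T '' symmDiff S B := by
    intro S x hx
    by_contra hcon
    rw [Set.mem_union] at hcon
    push_neg at hcon
    obtain ⟨hD, hTD⟩ := hcon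
    apply hx
    have hSB : x ∈ S ↔ x ∈ B := by
      rw [Set.mem_symmDiff] at hD
      tauto
    have hTSB : x ∈ ⇑T '' S ↔ x ∈ ⇑T '' B := by
      constructor
      · rintro ⟨y, hy, rfl⟩
        refine ⟨y, ?_, rfl⟩
        by_contra hyB
        exact hTD ⟨y, Set.mem_symmDiff.mpr (Or.inl ⟨hy, hyB⟩), rfl⟩
      · rintro ⟨y, hy, rfl⟩
        refine ⟨y, ?_, rfl⟩
        by_contra hyS
        exact hTD ⟨y, Set.mem_symmDiff.mpr (Or.inr ⟨hy, hyS⟩), rfl⟩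
    simp only [invol]
    by_cases hS : x ∈ S
    · rw [if_pos hS, if_pos (hSB.mp hS)]
    · rw [if_neg hS, if_neg (fun h => hS (hSB.mpr h))]
      by_cases hTS : x ∈ ⇑T '' S
      · rw [if_pos hTS, if_pos (hTSB.mp hTS)]
      · rw [if_neg hTS, if_neg (fun h => hTS (hTSB.mpr h))]
  -- translation invariance of volume
  have htrans : ∀ (v : UnitAddCircle) (E : Set UnitAddCircle),
      volume ((· + v) '' E) = volume E := by
    intro v E
    rw [Set.image_add_right, measure_preimage_add_right]
  -- measure of short arcs
  have harcmeas : ∀ a u : ℝ, 0 < u → u ≤ 1 / 4 →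
      volume (((↑·) : ℝ → UnitAddCircle) '' Ico a (a + u)) ≤ ENNReal.ofReal u := by
    intro a u hu hu4
    have hsub : ((↑·) : ℝ → UnitAddCircle) '' Ico a (a + u)
        ⊆ Metric.closedBall (((a + u / 2 : ℝ) : UnitAddCircle)) (u / 2) := by
      rintro _ ⟨s, hs, rfl⟩
      rw [Metric.mem_closedBall]
      have hd : dist ((s : ℝ) : UnitAddCircle) (((a + u / 2 : ℝ) : UnitAddCircle))
          = ‖((s - (a + u / 2) : ℝ) : UnitAddCircle)‖ := by
        rw [dist_eq_norm]
        norm_cast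
      have habs : |s - (a + u / 2)| ≤ u / 2 := by
        rw [abs_le]
        exact ⟨by linarith [hs.1], by linarith [hs.2]⟩
      rw [hd, (AddCircle.norm_coe_eq_abs_iff (p := 1) one_ne_zero).mpr
        (le_trans habs (by rw [abs_one]; linarith))]
      exact habs
    calc volume (((↑·) : ℝ → UnitAddCircle) '' Ico a (a + u))
        ≤ volume (Metric.closedBall (((a + u / 2 : ℝ) : UnitAddCircle)) (u / 2)) :=
          measure_mono hsub
      _ = ENNReal.ofReal (min 1 (2 * (u / 2))) := AddCircle.volume_closedBall (T := 1) _
      _ ≤ ENNReal.ofReal u := by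
          apply ENNReal.ofReal_le_ofReal
          rw [show (2 : ℝ) * (u / 2) = u by ring]
          exact min_le_right _ _
  -- shift bound
  have hshift : ∀ u : ℝ, 0 < u → u ≤ 1 / 4 →
      volume (symmDiff ((· + ((u : ℝ) : UnitAddCircle)) '' A) A) ≤ ENNReal.ofReal (2 * u) := by
    intro u hu hu4
    have hsub : symmDiff ((· + ((u : ℝ) : UnitAddCircle)) '' A) A
        ⊆ (((↑·) : ℝ → UnitAddCircle) '' Ico β (β + u))
          ∪ (((↑·) : ℝ → UnitAddCircle) '' Ico 0 (0 + u)) := by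
      intro x hx
      rw [Set.mem_symmDiff] at hx
      rcases hx with ⟨⟨_, ⟨s, hs, rfl⟩, rfl⟩, hnA⟩ | ⟨⟨s, hs, rfl⟩, hnuA⟩
      · left
        refine ⟨s + u, ⟨?_, by linarith [hs.2]⟩, rfl⟩
        by_contra hlt
        push_neg at hlt
        exact hnA ⟨s + u, ⟨by linarith [hs.1], hlt⟩, rfl⟩
      · right
        refine ⟨s, ⟨hs.1, ?_⟩, rfl⟩
        by_contra hge
        push_neg at hge
        rw [zero_add] at hge
        refine hnuA ⟨((s - u : ℝ) : UnitAddCircle), ⟨s - u, ⟨by linarith, by linarith [hs.2]⟩, rfl⟩, ?_⟩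
        show ((s - u : ℝ) : UnitAddCircle) + ((u : ℝ) : UnitAddCircle) = ((s : ℝ) : UnitAddCircle)
        rw [show ((s - u : ℝ) : UnitAddCircle) + ((u : ℝ) : UnitAddCircle)
          = ((s - u + u : ℝ) : UnitAddCircle) from rfl]
        norm_num
    calc volume (symmDiff ((· + ((u : ℝ) : UnitAddCircle)) '' A) A)
        ≤ volume ((((↑·) : ℝ → UnitAddCircle) '' Ico β (β + u)))
          + volume ((((↑·) : ℝ → UnitAddCircle) '' Ico 0 (0 + u))) :=
          le_trans (measure_mono hsub) (measure_union_le _ _)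
      _ ≤ ENNReal.ofReal u + ENNReal.ofReal u :=
          add_le_add (harcmeas β u hu hu4) (harcmeas 0 u hu hu4)
      _ = ENNReal.ofReal (2 * u) := by
          rw [← ENNReal.ofReal_add hu.le hu.le]
          ring_nf
  -- choose a small positive t0
  obtain ⟨t0, ht0pos, ht04, ht0δ⟩ : ∃ t : ℝ, 0 < t ∧ t ≤ 1 / 4 ∧ ENNReal.ofReal (4 * t) < δ := by
    by_cases hδtop : δ = ⊤
    · exact ⟨1 / 8, by norm_num, by norm_num, by rw [hδtop]; exact ENNReal.ofReal_lt_top⟩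
    · have htR : 0 < δ.toReal := ENNReal.toReal_pos hδ.ne' hδtop
      refine ⟨min (1 / 8) (δ.toReal / 8), lt_min (by norm_num) (by linarith), ?_, ?_⟩
      · exact le_trans (min_le_left _ _) (by norm_num)
      · have h1 : 4 * min (1 / 8) (δ.toReal / 8) ≤ δ.toReal / 2 := by
          have := min_le_right (1 / 8) (δ.toReal / 8)
          linarith
        calc ENNReal.ofReal (4 * min (1 / 8) (δ.toReal / 8))
            ≤ ENNReal.ofReal (δ.toReal / 2) := ENNReal.ofReal_le_ofReal h1
          _ < ENNReal.ofReal δ.toReal := by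
              rw [ENNReal.ofReal_lt_ofReal_iff htR]
              linarith
          _ = δ := ENNReal.ofReal_toReal hδtop
  -- write γ as a real
  obtain ⟨g, rfl⟩ := QuotientAddGroup.mk_surjective γ
  -- choose k via density
  obtain ⟨k, m, hkm⟩ := dense_aux α hαirr g t0 ht0pos
  set u : ℝ := g - ((k : ℤ) • α + (m : ℝ)) with hu
  have hu0 : 0 < u := hkm.1
  have hut : u < t0 := hkm.2
  have hγ : ((g : ℝ) : UnitAddCircle) = ((u : ℝ) : UnitAddCircle) + (k : ℤ) • c := by
    have hg : g = (k : ℤ) • α + (m : ℝ) + u := by rw [hu]; ring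
    rw [hg]
    rw [show ((((k : ℤ) • α + (m : ℝ) + u : ℝ)) : UnitAddCircle)
      = (((k : ℤ) • α : ℝ) : UnitAddCircle) + ((m : ℝ) : UnitAddCircle)
        + ((u : ℝ) : UnitAddCircle) from rfl]
    rw [show (((k : ℤ) • α : ℝ) : UnitAddCircle) = (k : ℤ) • c from rfl]
    rw [show ((m : ℝ) : UnitAddCircle) = 0 by simp [AddCircle.coe_eq_zero_iff]]
    abel
  refine ⟨k, ?_⟩
  have h1 : {x | (⇑(T ^ k) ∘ invol T A ∘ ⇑(T ^ (-k))) x ≠ invol T B x}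
      ⊆ symmDiff ((· + ((k : ℤ) • c : UnitAddCircle)) '' A) B
        ∪ ⇑T '' symmDiff ((· + ((k : ℤ) • c : UnitAddCircle)) '' A) B := by
    intro x hx
    refine hdiff ((· + ((k : ℤ) • c : UnitAddCircle)) '' A) ?_
    simp only [Set.mem_setOf_eq] at hx ⊢
    rw [← hconj k x]
    exact hx
  have hBeq : B = (· + ((k : ℤ) • c : UnitAddCircle)) '' ((· + ((u : ℝ) : UnitAddCircle)) '' A) := by
    have hfun : (fun x => ((g : ℝ) : UnitAddCircle) + x)
        = ((· + (((k : ℤ) • c : UnitAddCircle))) ∘ (· + ((u : ℝ) : UnitAddCircle))) := by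
      funext a
      simp only [Function.comp_apply]
      rw [hγ]
      abel
    rw [hB, hfun, Set.image_comp]
  have hSBvol : volume (symmDiff ((· + ((k : ℤ) • c : UnitAddCircle)) '' A) B)
      ≤ ENNReal.ofReal (2 * u) := by
    rw [hBeq, ← Set.image_symmDiff (add_left_injective _), htrans, symmDiff_comm]
    exact hshift u hu0 (le_of_lt (lt_of_lt_of_le hut ht04))
  have hTvol : volume (⇑T '' symmDiff ((· + ((k : ℤ) • c : UnitAddCircle)) '' A) B)
      = volume (symmDiff ((· + ((k : ℤ) • c : UnitAddCircle)) '' A) B) := by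
    rw [hT]
    exact htrans c _
  calc volume {x | (⇑(T ^ k) ∘ invol T A ∘ ⇑(T ^ (-k))) x ≠ invol T B x}
      ≤ volume (symmDiff ((· + ((k : ℤ) • c : UnitAddCircle)) '' A) B)
          + volume (⇑T '' symmDiff ((· + ((k : ℤ) • c : UnitAddCircle)) '' A) B) :=
        le_trans (measure_mono h1) (measure_union_le _ _)
    _ = volume (symmDiff ((· + ((k : ℤ) • c : UnitAddCircle)) '' A) B)
          + volume (symmDiff ((· + ((k : ℤ) • c : UnitAddCircle)) '' A) B) := by rw [hTvol]
    _ ≤ ENNReal.ofReal (2 * u) + ENNReal.ofReal (2 * u) := add_le_add hSBvol hSBvol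
    _ = ENNReal.ofReal (4 * u) := by
        rw [← ENNReal.ofReal_add (by linarith) (by linarith)]
        ring_nf
    _ ≤ ENNReal.ofReal (4 * t0) := ENNReal.ofReal_le_ofReal (by linarith)
    _ < δ := ht0δ
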